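/- For every integer n ≥ 1 and every real R ≥ 0, ∫_{0}^{R} ∫_{0}^{π} (1 − r² cos²θ)/(1 + r² cos²θ)² · r^{2n−1} sin^{2n−2}θ dθ dr = π ( P_n(R²) − (1 + R²)^{n − 3/2} ). -/

import Mathlib

open MeasureTheory Finset

/-- The generalized binomial coefficient `C(α, ℓ) = α(α−1)⋯(α−ℓ+1)/ℓ!`. -/
noncomputable def genChoose (α : ℝ) (ℓ : ℕ) : ℝ :=
  (∏ j ∈ Finset.range ℓ, (α - j)) / (Nat.factorial ℓ)

/-- The polynomial `P_n(X) = ∑_{ℓ=0}^{n−1} C(n−3/2, ℓ) X^ℓ`. -/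
noncomputable def Ppoly (n : ℕ) (x : ℝ) : ℝ :=
  ∑ ℓ ∈ Finset.range n, genChoose ((n : ℝ) - 3/2) ℓ * x ^ ℓ

open Real

lemma genChoose_zero (α : ℝ) : genChoose α 0 = 1 := by simp [genChoose]

lemma genChoose_succ (α : ℝ) (ℓ : ℕ) :
    genChoose α (ℓ+1) = genChoose α ℓ * (α - ℓ) / (ℓ+1) := by
  simp only [genChoose, Finset.prod_range_succ, Nat.factorial_succ]
  push_cast
  rw [div_mul_eq_mul_div, div_div, mul_comm ((ℓ:ℝ)+1) _]

lemma genChoose_shift (α : ℝ) (ℓ : ℕ) :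
    genChoose (α+1) (ℓ+1) = genChoose α ℓ * (α+1) / (ℓ+1) := by
  have hp : (∏ j ∈ Finset.range (ℓ+1), (α + 1 - (j:ℕ))) =
      (∏ j ∈ Finset.range ℓ, (α - j)) * (α+1) := by
    rw [Finset.prod_range_succ']
    congr 1
    · apply Finset.prod_congr rfl
      intro j _
      push_cast
      ring
    · norm_num
  simp only [genChoose, Nat.factorial_succ]
  rw [hp]
  push_cast
  rw [div_mul_eq_mul_div, div_div, mul_comm ((ℓ:ℝ)+1) _]

lemma genChoose_pascal (α : ℝ) (ℓ : ℕ) :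
    genChoose (α+1) (ℓ+1) = genChoose α (ℓ+1) + genChoose α ℓ := by
  rw [genChoose_shift, genChoose_succ]
  have h2 : ((ℓ:ℝ)+1) ≠ 0 := by positivity
  field_simp
  ring

lemma sum_succ_genChoose (α : ℝ) (a : ℝ) (m : ℕ) :
    ∑ ℓ ∈ Finset.range (m+1), genChoose (α+1) ℓ * a ^ ℓ
      = (1+a) * ∑ ℓ ∈ Finset.range m, genChoose α ℓ * a ^ ℓ + genChoose α m * a ^ m := by
  induction m with
  | zero => simp [genChoose_zero]
  | succ m ih =>
    rw [Finset.sum_range_succ, ih, Finset.sum_range_succ, genChoose_pascal]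
    ring

lemma Ppoly_succ (k : ℕ) (a : ℝ) :
    Ppoly (k+1) a = (1+a) * Ppoly k a + genChoose ((k:ℝ) - 3/2) k * a ^ k := by
  have h := sum_succ_genChoose ((k:ℝ) - 3/2) a k
  unfold Ppoly
  push_cast
  rw [show (k:ℝ) + 1 - 3/2 = ((k:ℝ) - 3/2) + 1 from by ring]
  exact h

lemma Ppoly_zero (a : ℝ) : Ppoly 0 a = 0 := by simp [Ppoly]

lemma Ppoly_one (a : ℝ) : Ppoly 1 a = 1 := by
  simp [Ppoly, genChoose_zero]

lemma Ppoly_at_zero (n : ℕ) (hn : 1 ≤ n) : Ppoly n 0 = 1 := by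
  unfold Ppoly
  rw [Finset.sum_eq_single_of_mem 0 (Finset.mem_range.mpr hn)]
  · simp [genChoose_zero]
  · intro ℓ _ hℓ
    simp [zero_pow hℓ]
noncomputable def Wint (m : ℕ) : ℝ := ∫ θ in (0:ℝ)..π, sin θ ^ (2*m)

noncomputable def Mint (m : ℕ) (a : ℝ) : ℝ :=
  ∫ θ in (0:ℝ)..π, sin θ ^ (2*m) / (1 + a * cos θ ^ 2)

noncomputable def Qint (k : ℕ) (a : ℝ) : ℝ :=
  ∫ θ in (0:ℝ)..π, (1 - a * cos θ ^ 2) / (1 + a * cos θ ^ 2) ^ 2 * sin θ ^ (2*k)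

noncomputable def Dfun (k : ℕ) (a : ℝ) : ℝ := (1+a) ^ ((k:ℝ) - 3/2) - Ppoly k a

lemma denom_pos (a : ℝ) (ha : 0 ≤ a) (θ : ℝ) : 0 < 1 + a * cos θ ^ 2 := by
  have := mul_nonneg ha (sq_nonneg (cos θ))
  linarith

lemma cont_den (a : ℝ) : Continuous fun θ : ℝ => 1 + a * cos θ ^ 2 := by fun_prop

lemma cont_M (a : ℝ) (ha : 0 ≤ a) (m : ℕ) :
    Continuous fun θ : ℝ => sin θ ^ (2*m) / (1 + a * cos θ ^ 2) :=
  (continuous_sin.pow _).div (cont_den a) (fun θ => (denom_pos a ha θ).ne')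

lemma cont_MC (a : ℝ) (ha : 0 ≤ a) (m : ℕ) :
    Continuous fun θ : ℝ => sin θ ^ (2*m) * cos θ ^ 2 / (1 + a * cos θ ^ 2) :=
  ((continuous_sin.pow _).mul (continuous_cos.pow 2)).div (cont_den a)
    (fun θ => (denom_pos a ha θ).ne')

lemma cont_Q (a : ℝ) (ha : 0 ≤ a) (k : ℕ) :
    Continuous fun θ : ℝ =>
      (1 - a * cos θ ^ 2) / (1 + a * cos θ ^ 2) ^ 2 * sin θ ^ (2*k) :=
  (((continuous_const.sub (continuous_const.mul (continuous_cos.pow 2))).div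
    ((cont_den a).pow 2) (fun θ => pow_ne_zero 2 (denom_pos a ha θ).ne')).mul
    (continuous_sin.pow _))

lemma Wint_zero : Wint 0 = π := by
  simp [Wint]

lemma Wint_succ (k : ℕ) : Wint (k+1) = (2*(k:ℝ)+1)/(2*(k:ℝ)+2) * Wint k := by
  unfold Wint
  rw [show 2*(k+1) = 2*k+2 from by ring]
  rw [integral_sin_pow (2*k)]
  simp only [Real.sin_zero, Real.sin_pi]
  rw [zero_pow (by omega : 2*k+1 ≠ 0)]
  push_cast
  ring

lemma Wint_eq (k : ℕ) : Wint k = π * genChoose ((k:ℝ) - 1/2) k := by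
  induction k with
  | zero => simp [Wint_zero, genChoose_zero]
  | succ k ih =>
    rw [Wint_succ, ih]
    have h2 : ((k:ℝ)+1) ≠ 0 := by positivity
    have h3 : (2*(k:ℝ)+2) ≠ 0 := by positivity
    push_cast
    rw [show (k:ℝ) + 1 - 1/2 = ((k:ℝ) - 1/2) + 1 from by ring, genChoose_shift]
    field_simp
    ring
lemma arctan_deriv_aux (a b : ℝ) (ha : 0 ≤ a) (hb2 : b^2 = 1+a) (hbpos : 0 < b)
    (θ : ℝ) (hcos : cos θ ≠ 0) :
    HasDerivAt (fun u : ℝ => arctan (tan u / b) / b) (1 / (1 + a * cos θ ^ 2)) θ := by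
  have htan := Real.hasDerivAt_tan hcos
  have h2 : HasDerivAt (fun u : ℝ => tan u / b) ((1 / cos θ ^ 2)/b) θ := htan.div_const b
  have h3 := (Real.hasDerivAt_arctan (tan θ / b)).comp θ h2
  have h4 := h3.div_const b
  refine h4.congr_deriv (Eq.symm ?_)
  have ht : tan θ = sin θ / cos θ := Real.tan_eq_sin_div_cos θ
  have hs : sin θ ^ 2 = 1 - cos θ ^ 2 := Real.sin_sq θ
  have hden := denom_pos a ha θ
  rw [ht]
  rw [div_eq_div_iff hden.ne' (by positivity)]
  field_simp
  ring_nf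
  linear_combination hs + cos θ^2 * hb2

lemma Mint_zero (a : ℝ) (ha : 0 ≤ a) :
    Mint 0 a = π * (1+a) ^ (-(1/2) : ℝ) := by
  have h1a : (0:ℝ) < 1 + a := by linarith
  set b := Real.sqrt (1+a) with hbdef
  have hbpos : 0 < b := Real.sqrt_pos.mpr h1a
  have hb2 : b^2 = 1+a := Real.sq_sqrt h1a.le
  have hcont : Continuous fun θ : ℝ => 1 / (1 + a * cos θ ^ 2) :=
    continuous_const.div (cont_den a) (fun θ => (denom_pos a ha θ).ne')
  -- half integral
  have key : (∫ θ in (0:ℝ)..(π/2), 1 / (1 + a * cos θ ^ 2)) = π/(2*b) := by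
    set Φ : ℝ → ℝ := fun t => ∫ θ in (0:ℝ)..t, 1 / (1 + a * cos θ ^ 2) with hΦdef
    have hΦc : Continuous Φ :=
      intervalIntegral.continuous_primitive (fun c d => hcont.intervalIntegrable c d) 0
    have hF : ∀ t ∈ Set.Ico (0:ℝ) (π/2), Φ t = arctan (tan t / b) / b := by
      intro t ht
      have hderiv : ∀ θ ∈ Set.uIcc (0:ℝ) t,
          HasDerivAt (fun u : ℝ => arctan (tan u / b) / b) (1 / (1 + a * cos θ ^ 2)) θ := by
        intro θ hθ
        rw [Set.uIcc_of_le ht.1] at hθ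
        have hcos : 0 < cos θ :=
          Real.cos_pos_of_mem_Ioo ⟨by nlinarith [hθ.1, Real.pi_pos], lt_of_le_of_lt hθ.2 ht.2⟩
        exact arctan_deriv_aux a b ha hb2 hbpos θ hcos.ne'
      have := intervalIntegral.integral_eq_sub_of_hasDerivAt hderiv (hcont.intervalIntegrable 0 t)
      simp only [hΦdef, this, Real.tan_zero, zero_div, Real.arctan_zero]
      ring
    have hlim1 : Filter.Tendsto Φ (nhdsWithin (π/2) (Set.Iio (π/2))) (nhds (Φ (π/2))) :=
      (hΦc.tendsto _).mono_left nhdsWithin_le_nhds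
    have hlim2 : Filter.Tendsto (fun t => arctan (tan t / b) / b)
        (nhdsWithin (π/2) (Set.Iio (π/2))) (nhds ((π/2)/b)) := by
      have h1 : Filter.Tendsto (fun t => tan t / b) (nhdsWithin (π/2) (Set.Iio (π/2)))
          Filter.atTop := Real.tendsto_tan_pi_div_two.atTop_div_const hbpos
      have h2 : Filter.Tendsto arctan Filter.atTop (nhds (π/2)) :=
        Real.tendsto_arctan_atTop.mono_right nhdsWithin_le_nhds
      exact (h2.comp h1).div_const b
    have hev : Φ =ᶠ[nhdsWithin (π/2) (Set.Iio (π/2))] (fun t => arctan (tan t / b) / b) := by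
      have hmem : Set.Ioo (0:ℝ) (π/2) ∈ nhdsWithin (π/2) (Set.Iio (π/2)) :=
        Ioo_mem_nhdsLT_of_mem ⟨by positivity, le_refl _⟩
      exact Filter.eventuallyEq_of_mem hmem (fun t htm => hF t ⟨htm.1.le, htm.2⟩)
    have h5 : Φ (π/2) = π/2/b := tendsto_nhds_unique (hlim1.congr' hev) hlim2
    rw [div_div] at h5
    exact h5
  -- reflection: ∫_{π/2}^π = ∫_0^{π/2}
  have hrefl : (∫ θ in (π/2:ℝ)..π, 1 / (1 + a * cos θ ^ 2))
      = ∫ θ in (0:ℝ)..(π/2), 1 / (1 + a * cos θ ^ 2) := by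
    have h := intervalIntegral.integral_comp_sub_left (a := 0) (b := π/2)
      (fun θ => 1 / (1 + a * cos θ ^ 2)) π
    rw [show π - π/2 = π/2 from by ring, sub_zero] at h
    rw [← h]
    apply intervalIntegral.integral_congr
    intro θ _
    simp [Real.cos_pi_sub]
  have hsplit : (∫ θ in (0:ℝ)..(π/2), 1 / (1 + a * cos θ ^ 2))
      + (∫ θ in (π/2:ℝ)..π, 1 / (1 + a * cos θ ^ 2))
      = ∫ θ in (0:ℝ)..π, 1 / (1 + a * cos θ ^ 2) :=
    intervalIntegral.integral_add_adjacent_intervals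
      (hcont.intervalIntegrable 0 (π/2)) (hcont.intervalIntegrable (π/2) π)
  have hM : Mint 0 a = ∫ θ in (0:ℝ)..π, 1 / (1 + a * cos θ ^ 2) := by
    unfold Mint
    apply intervalIntegral.integral_congr
    intro θ _
    norm_num
  have hb' : ((1:ℝ)+a) ^ (-(1/2) : ℝ) = b⁻¹ := by
    rw [Real.rpow_neg h1a.le, hbdef, Real.sqrt_eq_rpow]
  rw [hM, ← hsplit, hrefl, key, hb']
  field_simp
  ring

lemma IBP (k : ℕ) (a : ℝ) (ha : 0 ≤ a) :
    (∫ θ in (0:ℝ)..π, ((2*(k:ℝ)+1) * (sin θ ^ (2*k) * cos θ ^ 2 / (1 + a * cos θ ^ 2))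
        - (1 - a * cos θ ^ 2) / (1 + a * cos θ ^ 2) ^ 2 * sin θ ^ (2*k+2))) = 0 := by
  have hD : ∀ θ : ℝ, HasDerivAt (fun u => sin u ^ (2*k+1) * cos u / (1 + a * cos u ^ 2))
      ((2*(k:ℝ)+1) * (sin θ ^ (2*k) * cos θ ^ 2 / (1 + a * cos θ ^ 2))
        - (1 - a * cos θ ^ 2) / (1 + a * cos θ ^ 2) ^ 2 * sin θ ^ (2*k+2)) θ := by
    intro θ
    have hden := denom_pos a ha θ
    have h1 := (Real.hasDerivAt_sin θ).pow (2*k+1)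
    simp only [Nat.add_sub_cancel] at h1
    have h2 : HasDerivAt (fun u => sin u ^ (2*k+1) * cos u)
        ((↑(2*k+1) * sin θ ^ (2*k) * cos θ) * cos θ + sin θ ^ (2*k+1) * (-sin θ)) θ :=
      h1.mul (Real.hasDerivAt_cos θ)
    have h3 : HasDerivAt (fun u : ℝ => 1 + a * cos u ^ 2)
        (a * (2 * cos θ ^ 1 * (-sin θ))) θ := by
      have hc := (Real.hasDerivAt_cos θ).pow 2
      exact ((hc.const_mul a).const_add 1)
    have h4 := h2.div h3 hden.ne'
    refine h4.congr_deriv (Eq.symm ?_)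
    have h2k : ((2*k+1 : ℕ) : ℝ) = 2*(k:ℝ)+1 := by push_cast; ring
    rw [h2k]
    field_simp
    ring
  have hcont : Continuous fun θ : ℝ =>
      (2*(k:ℝ)+1) * (sin θ ^ (2*k) * cos θ ^ 2 / (1 + a * cos θ ^ 2))
        - (1 - a * cos θ ^ 2) / (1 + a * cos θ ^ 2) ^ 2 * sin θ ^ (2*k+2) := by
    apply Continuous.sub
    · exact continuous_const.mul (cont_MC a ha k)
    · exact (((continuous_const.sub (continuous_const.mul (continuous_cos.pow 2))).div
        ((cont_den a).pow 2) (fun θ => pow_ne_zero 2 (denom_pos a ha θ).ne')).mul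
        (continuous_sin.pow _))
  rw [intervalIntegral.integral_eq_sub_of_hasDerivAt (fun θ _ => hD θ)
    (hcont.intervalIntegrable 0 π)]
  rw [Real.sin_pi, Real.sin_zero, zero_pow (by omega : 2*k+1 ≠ 0)]
  norm_num

lemma CSQ (k : ℕ) (a : ℝ) (ha : 0 < a) :
    (∫ θ in (0:ℝ)..π, sin θ ^ (2*k) * cos θ ^ 2 / (1 + a * cos θ ^ 2))
      = (1/a) * (Wint k - Mint k a) := by
  have h1 : ∀ θ ∈ Set.uIcc (0:ℝ) π, sin θ ^ (2*k) * cos θ ^ 2 / (1 + a * cos θ ^ 2)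
      = (1/a) * (sin θ ^ (2*k) - sin θ ^ (2*k) / (1 + a * cos θ ^ 2)) := by
    intro θ _
    have hden := denom_pos a ha.le θ
    field_simp
    ring
  rw [intervalIntegral.integral_congr h1, intervalIntegral.integral_const_mul,
    intervalIntegral.integral_sub (f := fun θ => sin θ ^ (2*k)) ((continuous_sin.pow _).intervalIntegrable 0 π)
      ((cont_M a ha.le k).intervalIntegrable 0 π)]
  rfl

lemma Qint_succ (k : ℕ) (a : ℝ) (ha : 0 < a) :
    Qint (k+1) a = (2*(k:ℝ)+1) * ((1/a) * (Wint k - Mint k a)) := by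
  have hI := IBP k a ha.le
  rw [intervalIntegral.integral_sub
    (f := fun θ => (2*(k:ℝ)+1) * (sin θ ^ (2*k) * cos θ ^ 2 / (1 + a * cos θ ^ 2)))
    ((continuous_const.mul (cont_MC a ha.le k)).intervalIntegrable 0 π)
    ((cont_Q a ha.le (k+1)).intervalIntegrable 0 π |>.congr ?hcg)] at hI
  case hcg =>
    intro θ _
    rw [show 2*(k+1) = 2*k+2 from by ring]
  · rw [sub_eq_zero] at hI
    have hQ : Qint (k+1) a = ∫ θ in (0:ℝ)..π,
        (1 - a * cos θ ^ 2) / (1 + a * cos θ ^ 2) ^ 2 * sin θ ^ (2*k+2) := by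
      unfold Qint
      rw [show 2*(k+1) = 2*k+2 from by ring]
    rw [hQ, ← hI, intervalIntegral.integral_const_mul, CSQ k a ha]

lemma Mint_succ (k : ℕ) (a : ℝ) (ha : 0 < a) :
    Mint (k+1) a = Mint k a
      - ∫ θ in (0:ℝ)..π, sin θ ^ (2*k) * cos θ ^ 2 / (1 + a * cos θ ^ 2) := by
  have hsub : (∫ θ in (0:ℝ)..π, (sin θ ^ (2*k) / (1 + a * cos θ ^ 2)
        - sin θ ^ (2*k) * cos θ ^ 2 / (1 + a * cos θ ^ 2)))
      = (∫ θ in (0:ℝ)..π, sin θ ^ (2*k) / (1 + a * cos θ ^ 2))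
        - ∫ θ in (0:ℝ)..π, sin θ ^ (2*k) * cos θ ^ 2 / (1 + a * cos θ ^ 2) :=
    intervalIntegral.integral_sub ((cont_M a ha.le k).intervalIntegrable 0 π)
      ((cont_MC a ha.le k).intervalIntegrable 0 π)
  unfold Mint
  rw [show 2*(k+1) = 2*k+2 from by ring, ← hsub]
  apply intervalIntegral.integral_congr
  intro θ _
  have hden := denom_pos a ha.le θ
  have hs : sin θ ^ 2 = 1 - cos θ ^ 2 := Real.sin_sq θ
  field_simp
  linear_combination (sin θ ^ (2*k)) * hs

lemma Dfun_succ (k : ℕ) (a : ℝ) (ha : 0 ≤ a) :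
    Dfun (k+1) a = (1+a) * Dfun k a - genChoose ((k:ℝ) - 3/2) k * a ^ k := by
  unfold Dfun
  have h1a : (0:ℝ) < 1 + a := by linarith
  have hr : ((1:ℝ)+a) ^ ((↑(k+1):ℝ) - 3/2) = (1+a) * (1+a) ^ ((k:ℝ) - 3/2) := by
    push_cast
    rw [show (k:ℝ) + 1 - 3/2 = ((k:ℝ) - 3/2) + 1 from by ring,
      Real.rpow_add_one h1a.ne']
    ring
  rw [hr, Ppoly_succ]
  ring

lemma Qint_base (a : ℝ) (ha : 0 < a) : Qint 0 a = π * (1+a) ^ (-(3/2) : ℝ) := by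
  have hden := fun θ => denom_pos a ha.le θ
  have h1a : (0:ℝ) < 1 + a := by linarith
  -- the exact-derivative fact
  have hD : ∀ θ : ℝ, HasDerivAt (fun u => sin u * cos u / (1 + a * cos u ^ 2))
      (((2+a) * cos θ ^ 2 - 1) / (1 + a * cos θ ^ 2) ^ 2) θ := by
    intro θ
    have h2 : HasDerivAt (fun u => sin u * cos u)
        (cos θ * cos θ + sin θ * (-sin θ)) θ :=
      (Real.hasDerivAt_sin θ).mul (Real.hasDerivAt_cos θ)
    have h3 : HasDerivAt (fun u : ℝ => 1 + a * cos u ^ 2)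
        (a * (2 * cos θ ^ 1 * (-sin θ))) θ := by
      have hc := (Real.hasDerivAt_cos θ).pow 2
      exact ((hc.const_mul a).const_add 1)
    have h4 := h2.div h3 (hden θ).ne'
    refine h4.congr_deriv (Eq.symm ?_)
    have hs : sin θ ^ 2 = 1 - cos θ ^ 2 := Real.sin_sq θ
    field_simp
    linear_combination ((1 + a*cos θ^2)^2 - 3*a*cos θ^2 - a^2*cos θ^4) * hs
  have hcontZ : Continuous fun θ : ℝ =>
      ((2+a) * cos θ ^ 2 - 1) / (1 + a * cos θ ^ 2) ^ 2 :=
    ((continuous_const.mul (continuous_cos.pow 2)).sub continuous_const).div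
      ((cont_den a).pow 2) (fun θ => pow_ne_zero 2 (hden θ).ne')
  have hZ : (∫ θ in (0:ℝ)..π, ((2+a) * cos θ ^ 2 - 1) / (1 + a * cos θ ^ 2) ^ 2) = 0 := by
    rw [intervalIntegral.integral_eq_sub_of_hasDerivAt (fun θ _ => hD θ)
      (hcontZ.intervalIntegrable 0 π)]
    simp
  -- pointwise decomposition
  have hpt : ∀ θ ∈ Set.uIcc (0:ℝ) π,
      (1 - a * cos θ ^ 2) / (1 + a * cos θ ^ 2) ^ 2 * sin θ ^ (2*0)
        = (-a/(1+a)) * (((2+a) * cos θ ^ 2 - 1) / (1 + a * cos θ ^ 2) ^ 2)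
          + (1/(1+a)) * (1 / (1 + a * cos θ ^ 2)) := by
    intro θ _
    have h := hden θ
    rw [pow_zero, mul_one]
    field_simp
    ring
  have hcont1 : Continuous fun θ : ℝ => 1 / (1 + a * cos θ ^ 2) :=
    continuous_const.div (cont_den a) (fun θ => (hden θ).ne')
  unfold Qint
  rw [intervalIntegral.integral_congr hpt,
    intervalIntegral.integral_add
      (f := fun θ => (-a/(1+a)) * (((2+a) * cos θ ^ 2 - 1) / (1 + a * cos θ ^ 2) ^ 2))
      (g := fun θ => (1/(1+a)) * (1 / (1 + a * cos θ ^ 2)))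
      ((continuous_const.mul hcontZ).intervalIntegrable 0 π)
      ((continuous_const.mul hcont1).intervalIntegrable 0 π),
    intervalIntegral.integral_const_mul, intervalIntegral.integral_const_mul, hZ]
  have hM0 := Mint_zero a ha.le
  have hMeq : Mint 0 a = ∫ θ in (0:ℝ)..π, 1 / (1 + a * cos θ ^ 2) := by
    unfold Mint
    apply intervalIntegral.integral_congr
    intro θ _
    norm_num
  rw [← hMeq, hM0]
  rw [show (-(3/2) : ℝ) = (-(1/2) : ℝ) + (-1 : ℝ) from by norm_num,
    Real.rpow_add h1a, Real.rpow_neg_one]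
  field_simp
  ring

lemma main_ind (k : ℕ) : ∀ a : ℝ, 0 < a →
    a ^ k * Qint k a = (1 - 2*(k:ℝ)) * π * Dfun k a := by
  induction k with
  | zero =>
    intro a ha
    rw [Qint_base a ha]
    unfold Dfun
    rw [Ppoly_zero]
    norm_num
  | succ k ih =>
    intro a ha
    have hane : a ≠ 0 := ha.ne'
    rcases k with _ | j
    · -- k = 0 : prove for index 1
      have e1 := Qint_succ 0 a ha
      rw [Wint_zero] at e1
      rw [Mint_zero a ha.le] at e1
      rw [e1]
      unfold Dfun
      rw [Ppoly_one]
      push_cast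
      rw [show ((1:ℝ) - 3/2) = (-(1/2) : ℝ) from by norm_num]
      field_simp
      ring
    · -- k = j+1 : prove for index j+2
      have e1 := Qint_succ (j+1) a ha
      have e2 := Mint_succ j a ha
      have e3 := CSQ j a ha
      have e4 := Qint_succ j a ha
      have e5 := Wint_succ j
      have e6 := ih a ha
      have e7 := Dfun_succ (j+1) a ha.le
      have e8 := genChoose_succ (((j:ℝ)+1) - 3/2) j
      have e9 := Wint_eq j
      have hj1 : (2*(j:ℝ)+1) ≠ 0 := by positivity
      have hj2 : (2*(j:ℝ)+2) ≠ 0 := by positivity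
      have hj3 : (2*(j:ℝ)+3) ≠ 0 := by positivity
      have hjj : ((j:ℝ)+1) ≠ 0 := by positivity
      have hX : Mint j a = Wint j - a * Qint (j+1) a / (2*(j:ℝ)+1) := by
        rw [e4]
        field_simp
        ring
      have hM1 : Mint (j+1) a = Wint j - (1+a) * Qint (j+1) a / (2*(j:ℝ)+1) := by
        rw [e2, e3, hX]
        field_simp
        ring
      have hQ2 : a * Qint (j+2) a = (2*(j:ℝ)+3) *
          (- Wint j/(2*(j:ℝ)+2) + (1+a) * Qint (j+1) a/(2*(j:ℝ)+1)) := by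
        rw [e1, hM1, e5]
        push_cast
        field_simp
        ring
      have hQ1' : a^(j+1) * Qint (j+1) a = -((2*(j:ℝ)+1) * π * Dfun (j+1) a) := by
        rw [e6]
        push_cast
        ring
      have hG : genChoose (((j:ℝ)+1) - 3/2) (j+1)
          = genChoose ((j:ℝ) - 1/2) j * (-(1/2))/((j:ℝ)+1) := by
        rw [e8]
        rw [show (((j:ℝ)+1) - 3/2) = ((j:ℝ) - 1/2) from by ring]
        norm_num
      have e7' : Dfun (j+2) a = (1+a) * Dfun (j+1) a
          - genChoose ((j:ℝ) - 1/2) j * (-(1/2))/((j:ℝ)+1) * a^(j+1) := by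
        push_cast at e7
        rw [e7, hG]
      calc a^(j+2) * Qint (j+2) a = a^(j+1) * (a * Qint (j+2) a) := by ring
        _ = a^(j+1) * ((2*(j:ℝ)+3) *
            (- Wint j/(2*(j:ℝ)+2) + (1+a) * Qint (j+1) a/(2*(j:ℝ)+1))) := by rw [hQ2]
        _ = (2*(j:ℝ)+3) * (- (a^(j+1) * Wint j)/(2*(j:ℝ)+2)
            + (1+a) * (a^(j+1) * Qint (j+1) a)/(2*(j:ℝ)+1)) := by ring
        _ = (2*(j:ℝ)+3) * (- (a^(j+1) * Wint j)/(2*(j:ℝ)+2)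
            - (1+a) * (π * Dfun (j+1) a)) := by
              rw [hQ1']
              field_simp
              ring
        _ = (1 - 2*(↑(j+2):ℝ)) * π * Dfun (j+2) a := by
              rw [e7', e9]
              push_cast
              field_simp
              ring

lemma hasDerivAt_Ppoly (k : ℕ) (a : ℝ) :
    HasDerivAt (fun x => Ppoly (k+1) x) (((k:ℝ) - 1/2) * Ppoly k a) a := by
  have h : HasDerivAt (fun x => Ppoly (k+1) x)
      (∑ ℓ ∈ Finset.range (k+1), genChoose ((↑(k+1):ℝ) - 3/2) ℓ * ((ℓ:ℝ) * a^(ℓ-1))) a := by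
    simp only [Ppoly]
    apply HasDerivAt.fun_sum
    intro ℓ _
    exact (hasDerivAt_pow ℓ a).const_mul _
  convert h using 1
  rw [Finset.sum_range_succ']
  simp only [Nat.cast_zero, zero_mul, mul_zero, add_zero, Nat.add_sub_cancel]
  unfold Ppoly
  rw [Finset.mul_sum]
  apply Finset.sum_congr rfl
  intro i _
  have hsh := genChoose_shift ((k:ℝ) - 3/2) i
  have hc : ((↑(k+1):ℝ) - 3/2) = ((k:ℝ) - 3/2) + 1 := by push_cast; ring
  rw [hc, hsh]
  have hii : ((i:ℝ)+1) ≠ 0 := by positivity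
  push_cast
  field_simp
  ring

lemma hasDerivAt_F (k : ℕ) (r : ℝ) :
    HasDerivAt (fun x : ℝ => π * (Ppoly (k+1) (x^2) - (1 + x^2) ^ ((↑(k+1):ℝ) - 3/2)))
      ((1 - 2*(k:ℝ)) * π * (r * Dfun k (r^2))) r := by
  have hsq : HasDerivAt (fun x : ℝ => x^2) (2*r) r := by
    simpa using hasDerivAt_pow 2 r
  have hsq' : HasDerivAt (fun x : ℝ => 1 + x^2) (2*r) r := hsq.const_add 1
  have h1 : HasDerivAt (fun x : ℝ => Ppoly (k+1) (x^2))
      ((((k:ℝ) - 1/2) * Ppoly k (r^2)) * (2*r)) r := by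
    have h := (hasDerivAt_Ppoly k (r^2)).comp r hsq
    exact h
  have h2 : HasDerivAt (fun x : ℝ => (1 + x^2) ^ ((↑(k+1):ℝ) - 3/2))
      (((↑(k+1):ℝ) - 3/2) * (1 + r^2) ^ ((k:ℝ) - 3/2) * (2*r)) r := by
    have hb : (1 + r^2 : ℝ) ≠ 0 := by positivity
    have h := (Real.hasDerivAt_rpow_const (x := 1 + r^2)
      (p := (↑(k+1):ℝ) - 3/2) (Or.inl hb)).comp r hsq'
    refine h.congr_deriv (Eq.symm ?_)
    rw [show ((↑(k+1):ℝ) - 3/2) - 1 = (k:ℝ) - 3/2 from by push_cast; ring]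
  have h3 := ((h1.sub h2).const_mul π)
  refine h3.congr_deriv (Eq.symm ?_)
  unfold Dfun
  push_cast
  ring

lemma cont_Ppoly (k : ℕ) : Continuous fun x : ℝ => Ppoly k x := by
  unfold Ppoly
  apply continuous_finset_sum
  intro i _
  exact continuous_const.mul (continuous_pow i)

lemma cont_E (k : ℕ) : Continuous fun r : ℝ => (1 - 2*(k:ℝ)) * π * (r * Dfun k (r^2)) := by
  apply continuous_const.mul
  apply continuous_id.mul
  unfold Dfun
  apply Continuous.sub
  · apply Continuous.rpow_const
    · fun_prop
    · intro x
      left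
      positivity
  · exact (cont_Ppoly k).comp (continuous_pow 2)

theorem stmt5 (n : ℕ) (hn : 1 ≤ n) (R : ℝ) (hR : 0 ≤ R) :
    (∫ r in (0 : ℝ)..R, ∫ θ in (0 : ℝ)..Real.pi,
        (1 - r ^ 2 * Real.cos θ ^ 2) / (1 + r ^ 2 * Real.cos θ ^ 2) ^ 2 *
          (r ^ (2 * n - 1) * Real.sin θ ^ (2 * n - 2))) =
      Real.pi * (Ppoly n (R ^ 2) - (1 + R ^ 2) ^ ((n : ℝ) - 3/2)) := by
  obtain ⟨k, rfl⟩ : ∃ k, n = k + 1 := ⟨n - 1, by omega⟩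
  rw [show 2 * (k+1) - 1 = 2*k+1 from by omega, show 2 * (k+1) - 2 = 2*k from by omega]
  have hg : ∀ r ∈ Set.uIcc (0:ℝ) R,
      (∫ θ in (0:ℝ)..π, (1 - r ^ 2 * cos θ ^ 2) / (1 + r ^ 2 * cos θ ^ 2) ^ 2 *
          (r ^ (2*k+1) * sin θ ^ (2*k)))
        = (1 - 2*(k:ℝ)) * π * (r * Dfun k (r^2)) := by
    intro r hr
    rw [Set.uIcc_of_le hR] at hr
    rcases eq_or_lt_of_le hr.1 with h0 | h0
    · rw [← h0]
      have hz : (2*k+1) ≠ 0 := by omega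
      simp [zero_pow hz]
    · have ha : (0:ℝ) < r^2 := by positivity
      have h1 : (∫ θ in (0:ℝ)..π, (1 - r ^ 2 * cos θ ^ 2) / (1 + r ^ 2 * cos θ ^ 2) ^ 2 *
            (r ^ (2*k+1) * sin θ ^ (2*k)))
          = r^(2*k+1) * Qint k (r^2) := by
        unfold Qint
        rw [← intervalIntegral.integral_const_mul]
        apply intervalIntegral.integral_congr
        intro θ _
        ring
      rw [h1, show r^(2*k+1) = r * (r^2)^k from by rw [pow_succ, pow_mul]; ring, mul_assoc,
        main_ind k (r^2) ha]
      ring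
  rw [intervalIntegral.integral_congr hg,
    intervalIntegral.integral_eq_sub_of_hasDerivAt (fun r _ => hasDerivAt_F k r)
      ((cont_E k).intervalIntegrable 0 R)]
  have hF0 : π * (Ppoly (k+1) ((0:ℝ)^2) - (1+(0:ℝ)^2) ^ ((↑(k+1):ℝ) - 3/2)) = 0 := by
    rw [show ((0:ℝ)^2) = 0 from by norm_num]
    rw [Ppoly_at_zero (k+1) (by omega)]
    norm_num
  rw [hF0, sub_zero]
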